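/- Fix λ > 0 and α ∈ (−1,1), and define E : (0,∞) → ℝ by E(τ) = e^{−λτ}·(e^{2λτ} − α)/(λτ), the absolute value of the control gain ε of the delayed-velocity ODFC scheme corresponding to multiplier α. Then E attains a global minimum on (0,∞) at a unique point τ*, and τ* satisfies τ* = (1/λ)·(1 − 2α/(α + e^{2λτ*})). -/

import Mathlib

noncomputable def odfcF (α s : ℝ) : ℝ := (Real.exp s - α * Real.exp (-s)) / s

noncomputable def odfcG (α s : ℝ) : ℝ :=
  s * (Real.exp s + α * Real.exp (-s)) - (Real.exp s - α * Real.exp (-s))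

lemma odfc_hasDerivAt_negexp (t : ℝ) :
    HasDerivAt (fun s : ℝ => Real.exp (-s)) (-Real.exp (-t)) t := by
  simpa using ((hasDerivAt_id t).neg.exp)

lemma odfc_hasDerivAt_G (α t : ℝ) :
    HasDerivAt (odfcG α) (t * (Real.exp t - α * Real.exp (-t))) t := by
  have h1 := odfc_hasDerivAt_negexp t
  have h2 := Real.hasDerivAt_exp t
  have := ((hasDerivAt_id t).mul (h2.add (h1.const_mul α))).sub (h2.sub (h1.const_mul α))
  refine this.congr_deriv ?_
  simp only [id_eq, Pi.add_apply]
  ring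

lemma odfc_hasDerivAt_F (α t : ℝ) (ht : t ≠ 0) :
    HasDerivAt (odfcF α) (odfcG α t / t ^ 2) t := by
  have h1 := odfc_hasDerivAt_negexp t
  have h2 := Real.hasDerivAt_exp t
  have := (h2.sub (h1.const_mul α)).div (hasDerivAt_id t) ht
  refine this.congr_deriv ?_
  unfold odfcG
  simp only [id_eq, Pi.sub_apply]
  field_simp
  ring

/-- For the velocity-based ODFC method, the absolute value of the control gain as a
function of the delay, `E(τ) = e^{−λτ}(e^{2λτ} − α)/(λτ)`, attains a global minimum on
`(0,∞)` at a unique point `τ*`, which satisfies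
`τ* = (1/λ)(1 − 2α/(α + e^{2λτ*}))`. -/
theorem odfc_velocity_optimal_delay
    (lam α : ℝ) (hlam : 0 < lam) (hα : α ∈ Set.Ioo (-1 : ℝ) 1)
    (E : ℝ → ℝ)
    (hE : ∀ τ > (0 : ℝ),
      E τ = Real.exp (-(lam * τ)) * (Real.exp (2 * lam * τ) - α) / (lam * τ)) :
    ∃ τs > (0 : ℝ),
      (∀ σ > (0 : ℝ), E τs ≤ E σ) ∧
      (∀ σ > (0 : ℝ), (∀ σ' > (0 : ℝ), E σ ≤ E σ') → σ = τs) ∧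
      τs = (1 / lam) * (1 - 2 * α / (α + Real.exp (2 * lam * τs))) := by
  obtain ⟨hα1, hα2⟩ := hα
  -- positivity of e^t - α e^{-t} for t > 0
  have hpos : ∀ t : ℝ, 0 < t → 0 < Real.exp t - α * Real.exp (-t) := by
    intro t ht
    have h1 : Real.exp (-t) < 1 := Real.exp_lt_one_iff.2 (by linarith)
    have h2 : (1:ℝ) < Real.exp t := Real.one_lt_exp_iff.2 ht
    have h3 : 0 < Real.exp (-t) := Real.exp_pos _
    nlinarith
  -- G is strictly monotone on [0,∞)
  have hGmono : StrictMonoOn (odfcG α) (Set.Ici 0) := by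
    apply strictMonoOn_of_deriv_pos (convex_Ici 0)
    · exact fun t _ => (odfc_hasDerivAt_G α t).continuousAt.continuousWithinAt
    · intro t ht
      rw [interior_Ici] at ht
      rw [(odfc_hasDerivAt_G α t).deriv]
      exact mul_pos ht (hpos t ht)
  have hG0 : odfcG α 0 < 0 := by simp [odfcG]; linarith
  have hG2 : 0 < odfcG α 2 := by
    unfold odfcG
    have h1 : (2:ℝ) + 1 < Real.exp 2 := Real.add_one_lt_exp (by norm_num)
    have h2 : Real.exp (-2) < 1 := Real.exp_lt_one_iff.2 (by norm_num)
    have h3 : 0 < Real.exp (-2:ℝ) := Real.exp_pos _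
    nlinarith
  -- root of G by IVT
  have hcont : ContinuousOn (odfcG α) (Set.Icc 0 2) :=
    fun t _ => (odfc_hasDerivAt_G α t).continuousAt.continuousWithinAt
  obtain ⟨t0, ht0mem, ht0⟩ :=
    intermediate_value_Ioo (by norm_num : (0:ℝ) ≤ 2) hcont ⟨hG0, hG2⟩
  obtain ⟨ht0pos, -⟩ := ht0mem
  -- sign of G around t0
  have hGneg : ∀ t : ℝ, 0 < t → t < t0 → odfcG α t < 0 := by
    intro t h1 h2
    have := hGmono (le_of_lt h1) (le_of_lt ht0pos) h2
    linarith [ht0 ▸ this]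
  have hGpos : ∀ t : ℝ, t0 < t → 0 < odfcG α t := by
    intro t h2
    have := hGmono (le_of_lt ht0pos) (by linarith : (0:ℝ) ≤ t) h2
    linarith [ht0 ▸ this]
  -- F strictly decreasing on (0, t0], strictly increasing on [t0, ∞)
  have hanti : StrictAntiOn (odfcF α) (Set.Ioc 0 t0) := by
    apply strictAntiOn_of_deriv_neg (convex_Ioc 0 t0)
    · exact fun t ht => (odfc_hasDerivAt_F α t (ne_of_gt ht.1)).continuousAt.continuousWithinAt
    · intro t ht
      rw [interior_Ioc] at ht
      rw [(odfc_hasDerivAt_F α t (ne_of_gt ht.1)).deriv]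
      exact div_neg_of_neg_of_pos (hGneg t ht.1 ht.2) (pow_pos ht.1 2)
  have hmono : StrictMonoOn (odfcF α) (Set.Ici t0) := by
    apply strictMonoOn_of_deriv_pos (convex_Ici t0)
    · exact fun t ht =>
        (odfc_hasDerivAt_F α t (by have := Set.mem_Ici.1 ht; intro h; nlinarith)).continuousAt.continuousWithinAt
    · intro t ht
      rw [interior_Ici] at ht
      have htpos : 0 < t := lt_trans ht0pos ht
      rw [(odfc_hasDerivAt_F α t (ne_of_gt htpos)).deriv]
      exact div_pos (hGpos t ht) (pow_pos htpos 2)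
  -- global minimality of F at t0
  have hFmin : ∀ t : ℝ, 0 < t → odfcF α t0 ≤ odfcF α t := by
    intro t ht
    rcases lt_trichotomy t t0 with h | h | h
    · exact le_of_lt (hanti ⟨ht, le_of_lt h⟩ ⟨ht0pos, le_refl _⟩ h)
    · exact le_of_eq (by rw [h])
    · exact le_of_lt (hmono (Set.mem_Ici.2 (le_refl _)) (Set.mem_Ici.2 (le_of_lt h)) h)
  have hFuniq : ∀ t : ℝ, 0 < t → odfcF α t ≤ odfcF α t0 → t = t0 := by
    intro t ht hle
    rcases lt_trichotomy t t0 with h | h | h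
    · exact absurd (hanti ⟨ht, le_of_lt h⟩ ⟨ht0pos, le_refl _⟩ h) (not_lt.2 hle)
    · exact h
    · exact absurd (hmono (Set.mem_Ici.2 (le_refl _)) (Set.mem_Ici.2 (le_of_lt h)) h) (not_lt.2 hle)
  -- relation between E and F
  have hEF : ∀ τ : ℝ, 0 < τ → E τ = odfcF α (lam * τ) := by
    intro τ hτ
    rw [hE τ hτ]
    unfold odfcF
    congr 1
    have h : Real.exp (-(lam * τ)) * Real.exp (2 * lam * τ) = Real.exp (lam * τ) := by
      rw [← Real.exp_add]; congr 1; ring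
    rw [mul_sub, h]
    ring
  refine ⟨t0 / lam, div_pos ht0pos hlam, ?_, ?_, ?_⟩
  · intro σ hσ
    rw [hEF _ (div_pos ht0pos hlam), hEF _ hσ]
    rw [mul_div_cancel₀ _ (ne_of_gt hlam)]
    exact hFmin _ (mul_pos hlam hσ)
  · intro σ hσ hminσ
    have h1 : odfcF α (lam * σ) ≤ odfcF α t0 := by
      have := hminσ (t0 / lam) (div_pos ht0pos hlam)
      rw [hEF _ hσ, hEF _ (div_pos ht0pos hlam), mul_div_cancel₀ _ (ne_of_gt hlam)] at this
      exact this
    have h2 := hFuniq (lam * σ) (mul_pos hlam hσ) h1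
    field_simp
    linarith [h2]
  · have hlt : 2 * lam * (t0 / lam) = 2 * t0 := by field_simp
    rw [hlt]
    have e2 : Real.exp (2 * t0) = Real.exp t0 * Real.exp t0 := by
      rw [← Real.exp_add]; congr 1; ring
    have hab : Real.exp t0 * Real.exp (-t0) = 1 := by
      rw [← Real.exp_add]; simp
    have hG' : t0 * (Real.exp t0 + α * Real.exp (-t0)) - (Real.exp t0 - α * Real.exp (-t0)) = 0 := ht0
    have key : t0 * (α + Real.exp (2 * t0)) = Real.exp (2 * t0) - α := by
      rw [e2]
      linear_combination Real.exp t0 * hG' - (t0 + 1) * α * hab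
    have hden : 0 < α + Real.exp (2 * t0) := by
      have : (1:ℝ) < Real.exp (2 * t0) := Real.one_lt_exp_iff.2 (by linarith)
      linarith
    field_simp
    rw [mul_comm t0 2, eq_sub_iff_add_eq, add_div' _ _ _ hden.ne', div_eq_one_iff_eq hden.ne']
    linear_combination key
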